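/- Let n ≥ 3, let V : Fin n → Finset ℝ² with each V i nonempty, set U i = convexHull ℝ (V i : Set ℝ²), and fix p1 ∈ U 0 and pn ∈ U (n−1). Then the value max over interior indices i (0 < i < n−1) and over v ∈ V i of infDist v (segment ℝ p1 pn) is the greatest element of the set { hausdorffDist (C(π)) (segment ℝ p1 pn) | π : Fin n → ℝ², (∀ i, π i ∈ U i), π 0 = p1, π (n−1) = pn }. -/

import Mathlib

open Metric

/-- The polygonal curve on vertices `p 0, …, p (n-1)`: the union of the segments
between consecutive vertices. -/
noncomputable def polyCurve {n : ℕ} (p : Fin n → EuclideanSpace ℝ (Fin 2)) :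
    Set (EuclideanSpace ℝ (Fin 2)) :=
  ⋃ i : Fin (n - 1),
    segment ℝ (p ⟨i.1, by have := i.isLt; omega⟩) (p ⟨i.1 + 1, by have := i.isLt; omega⟩)

section Aux

open RealInnerProductSpace

variable {F : Type*} [NormedAddCommGroup F] [InnerProductSpace ℝ F]

omit [InnerProductSpace ℝ F] in
lemma myMemCthick {s : Set F} (hs : s.Nonempty) {δ : ℝ} (hδ : 0 ≤ δ) {x : F} :
    x ∈ cthickening δ s ↔ infDist x s ≤ δ := by
  rw [Metric.mem_cthickening_iff, Metric.infDist]
  exact ENNReal.le_ofReal_iff_toReal_le (Metric.infEdist_ne_top hs) hδ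

omit [InnerProductSpace ℝ F] in
lemma myLeInfDist {s : Set F} (hs : s.Nonempty) {r : ℝ} {x : F}
    (h : ∀ z ∈ s, r ≤ dist x z) : r ≤ infDist x s := by
  by_contra hc
  push_neg at hc
  obtain ⟨z, hz, hlt⟩ := (Metric.infDist_lt_iff hs).1 hc
  exact absurd (h z hz) (not_le.2 hlt)

lemma myDiscreteIVT (g : ℕ → ℝ) (t : ℝ) :
    ∀ m, 1 ≤ m → g 0 ≤ t → t ≤ g m → ∃ i < m, t ∈ Set.uIcc (g i) (g (i + 1)) := by
  intro m
  induction m with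
  | zero => intro h; exact (Nat.not_succ_le_zero 0 h).elim
  | succ m ih =>
    intro _ h0 hm
    rcases le_or_gt t (g m) with h | h
    · rcases Nat.eq_zero_or_pos m with rfl | hm1
      · exact ⟨0, Nat.zero_lt_one, Set.mem_uIcc.2 (Or.inl ⟨h0, hm⟩)⟩
      · obtain ⟨i, hi, hio⟩ := ih hm1 h0 h
        exact ⟨i, by omega, hio⟩
    · exact ⟨m, by omega, Set.mem_uIcc.2 (Or.inl ⟨h.le, hm⟩)⟩

lemma mySegIVT (u q a b : F) (t : ℝ)
    (ht : t ∈ Set.uIcc (⟪a - q, u⟫) (⟪b - q, u⟫)) :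
    ∃ y ∈ segment ℝ a b, ⟪y - q, u⟫ = t := by
  rw [← segment_eq_uIcc] at ht
  obtain ⟨c, d, hc, hd, hcd, hy⟩ := ht
  refine ⟨c • a + d • b, ⟨c, d, hc, hd, hcd, rfl⟩, ?_⟩
  have hrw : c • a + d • b - q = c • (a - q) + d • (b - q) := by
    have hd' : d = 1 - c := by linarith
    subst hd'; module
  rw [hrw, inner_add_left, real_inner_smul_left, real_inner_smul_left]
  simpa using hy

lemma myPerp (y x z u : F) (r : ℝ) (hxz : x - z = r • u) (hperp : ⟪y - x, u⟫ = 0) :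
    dist y x ≤ dist y z := by
  have h1 : ⟪y - x, x - z⟫ = 0 := by rw [hxz, real_inner_smul_right, hperp, mul_zero]
  have h2 : ‖y - z‖ ^ 2 = ‖y - x‖ ^ 2 + ‖x - z‖ ^ 2 := by
    have hyz : y - z = (y - x) + (x - z) := by abel
    rw [hyz, norm_add_sq_real, h1]; ring
  rw [dist_eq_norm, dist_eq_norm]
  nlinarith [norm_nonneg (y - x), norm_nonneg (y - z), sq_nonneg ‖x - z‖]

lemma myInfDistHull {T : Set F} {s : Set F} (hs : Convex ℝ s) (hne : s.Nonempty) {M : ℝ}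
    (hM : 0 ≤ M) (hT : ∀ v ∈ T, infDist v s ≤ M) {z : F} (hz : z ∈ convexHull ℝ T) :
    infDist z s ≤ M := by
  refine (myMemCthick hne hM).1 (convexHull_min ?_ (hs.cthickening M) hz)
  exact fun v hv => (myMemCthick hne hM).2 (hT v hv)

lemma myInfDistSeg {a b : F} {s : Set F} (hs : Convex ℝ s) (hne : s.Nonempty) {M : ℝ}
    (hM : 0 ≤ M) (ha : infDist a s ≤ M) (hb : infDist b s ≤ M) {z : F}
    (hz : z ∈ segment ℝ a b) : infDist z s ≤ M := by
  rw [← convexHull_pair] at hz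
  refine myInfDistHull hs hne hM ?_ hz
  rintro v (rfl | hv)
  · exact ha
  · rw [Set.mem_singleton_iff] at hv; subst hv; exact hb

/-- The main upper bound: if every vertex of the polyline is within `M` of the segment,
and the polyline starts at `p1` and ends at `pn`, then the Hausdorff distance between the
polyline and the segment is at most `M`. -/
lemma myHausdorffLe (n : ℕ) (hn : 2 < n) (π : Fin n → EuclideanSpace ℝ (Fin 2))
    (p1 pn : EuclideanSpace ℝ (Fin 2)) (M : ℝ) (hM0 : 0 ≤ M)
    (h0 : π ⟨0, by omega⟩ = p1) (hlast : π ⟨n - 1, by omega⟩ = pn)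
    (hvert : ∀ j : Fin n, Metric.infDist (π j) (segment ℝ p1 pn) ≤ M) :
    Metric.hausdorffDist (polyCurve π) (segment ℝ p1 pn) ≤ M := by
  have hsegne : (segment ℝ p1 pn).Nonempty := ⟨p1, left_mem_segment ℝ p1 pn⟩
  have hπcast : ∀ (j k : ℕ) (hj : j < n) (hk : k < n), j = k → π ⟨j, hj⟩ = π ⟨k, hk⟩ := by
    rintro j k hj hk rfl; rfl
  have hπ0' : ∀ (h : 0 < n), π ⟨0, h⟩ = p1 := fun h => by rw [← h0]
  have hπn' : ∀ (h : n - 1 < n), π ⟨n - 1, h⟩ = pn := fun h => by rw [← hlast]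
  apply Metric.hausdorffDist_le_of_infDist hM0
  · -- every point of the curve is within M of the segment
    intro x hx
    simp only [polyCurve, Set.mem_iUnion] at hx
    obtain ⟨i, hxi⟩ := hx
    exact myInfDistSeg (convex_segment p1 pn) hsegne hM0 (hvert _) (hvert _) hxi
  · -- every point of the segment is within M of the curve
    intro x hx
    by_cases hu0 : pn - p1 = 0
    · have hpp : pn = p1 := by rwa [sub_eq_zero] at hu0
      obtain ⟨a, b, ha, hb, hab, hxeq⟩ := hx
      have hx1 : x = p1 := by rw [← hxeq, hpp, ← add_smul, hab, one_smul]
      have hmem : p1 ∈ polyCurve π := by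
        have h1 : π ⟨0, by omega⟩ ∈ polyCurve π :=
          Set.mem_iUnion.2 ⟨⟨0, by omega⟩, left_mem_segment ℝ _ _⟩
        rwa [h0] at h1
      rw [hx1, Metric.infDist_zero_of_mem hmem]
      exact hM0
    · set u : EuclideanSpace ℝ (Fin 2) := pn - p1 with hudef
      have huu : 0 < ⟪u, u⟫ := by
        rw [real_inner_self_eq_norm_sq]
        exact pow_pos (norm_pos_iff.2 hu0) 2
      obtain ⟨a, b, ha, hb, hab, hxeq⟩ := hx
      have hb1 : b ≤ 1 := by linarith
      have hxp1 : x - p1 = b • u := by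
        rw [← hxeq]
        have haa : a = 1 - b := by linarith
        subst haa; rw [hudef]; module
      set t : ℝ := b * ⟪u, u⟫ with htdef
      have hxt : ⟪x - p1, u⟫ = t := by rw [hxp1, real_inner_smul_left]
      -- the discrete IVT along the vertices
      have h0t : (fun i : ℕ => ⟪π ⟨min i (n - 1), by omega⟩ - p1, u⟫) 0 ≤ t := by
        simp only
        rw [hπcast (min 0 (n - 1)) 0 (by omega) (by omega) (by omega), hπ0' (by omega)]
        simp only [sub_self, inner_zero_left]
        exact mul_nonneg hb huu.le
      have htn : t ≤ (fun i : ℕ => ⟪π ⟨min i (n - 1), by omega⟩ - p1, u⟫) (n - 1) := by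
        simp only
        rw [hπcast (min (n - 1) (n - 1)) (n - 1) (by omega) (by omega) (by omega),
          hπn' (by omega)]
        rw [← hudef]
        nlinarith
      obtain ⟨i, hilt, hiIcc⟩ :=
        myDiscreteIVT (fun i : ℕ => ⟪π ⟨min i (n - 1), by omega⟩ - p1, u⟫) t (n - 1)
          (by omega) h0t htn
      rw [hπcast (min i (n - 1)) i (by omega) (by omega) (by omega),
        hπcast (min (i + 1) (n - 1)) (i + 1) (by omega) (by omega) (by omega)] at hiIcc
      obtain ⟨y, hyseg, hyf⟩ := mySegIVT u p1 (π ⟨i, by omega⟩) (π ⟨i + 1, by omega⟩) t hiIcc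
      have hycurve : y ∈ polyCurve π := Set.mem_iUnion.2 ⟨⟨i, by omega⟩, hyseg⟩
      have hperp : ⟪y - x, u⟫ = 0 := by
        have hsplit : y - x = (y - p1) - (x - p1) := by abel
        rw [hsplit, inner_sub_left, hyf, hxt, sub_self]
      have hdistxy : dist y x ≤ Metric.infDist y (segment ℝ p1 pn) := by
        apply myLeInfDist hsegne
        intro z hz
        obtain ⟨c, d, hc, hd, hcd, hzeq⟩ := hz
        have hzp1 : z - p1 = d • u := by
          rw [← hzeq]
          have hcc : c = 1 - d := by linarith
          subst hcc; rw [hudef]; module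
        have hxz : x - z = (b - d) • u := by
          have hsplit : x - z = (x - p1) - (z - p1) := by abel
          rw [hsplit, hxp1, hzp1, sub_smul]
        exact myPerp y x z u (b - d) hxz hperp
      have hyM : Metric.infDist y (segment ℝ p1 pn) ≤ M :=
        myInfDistSeg (convex_segment p1 pn) hsegne hM0 (hvert _) (hvert _) hyseg
      calc Metric.infDist x (polyCurve π) ≤ dist x y := Metric.infDist_le_dist_of_mem hycurve
        _ = dist y x := dist_comm x y
        _ ≤ M := le_trans hdistxy hyM

end Aux

/-- PCCSs, fixed endpoints: the greatest Hausdorff distance between a realisation and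
the one-segment simplification is the maximum, over interior indices `i` and vertices
`v ∈ V i`, of the distance from `v` to the segment. -/
theorem hausdorff_pccs_fixed_endpoints
    (n : ℕ) (hn : 3 ≤ n) (V : Fin n → Finset (EuclideanSpace ℝ (Fin 2)))
    (hV : ∀ i, (V i).Nonempty)
    (p1 pn : EuclideanSpace ℝ (Fin 2))
    (hp1 : p1 ∈ convexHull ℝ ((V ⟨0, by omega⟩ : Finset (EuclideanSpace ℝ (Fin 2))) : Set (EuclideanSpace ℝ (Fin 2))))
    (hpn : pn ∈ convexHull ℝ ((V ⟨n - 1, by omega⟩ : Finset (EuclideanSpace ℝ (Fin 2))) : Set (EuclideanSpace ℝ (Fin 2)))) :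
    ∃ M : ℝ,
      IsGreatest {x : ℝ | ∃ i : Fin n, 0 < i.1 ∧ i.1 < n - 1 ∧
        ∃ v ∈ V i, x = Metric.infDist v (segment ℝ p1 pn)} M ∧
      IsGreatest {d : ℝ | ∃ π : Fin n → EuclideanSpace ℝ (Fin 2),
        (∀ i, π i ∈ convexHull ℝ ((V i : Finset (EuclideanSpace ℝ (Fin 2))) : Set (EuclideanSpace ℝ (Fin 2)))) ∧
        π ⟨0, by omega⟩ = p1 ∧ π ⟨n - 1, by omega⟩ = pn ∧
        d = Metric.hausdorffDist (polyCurve π) (segment ℝ p1 pn)} M := by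
  classical
  set S1 : Set ℝ := {x : ℝ | ∃ i : Fin n, 0 < i.1 ∧ i.1 < n - 1 ∧
    ∃ v ∈ V i, x = Metric.infDist v (segment ℝ p1 pn)} with hS1def
  have hsegne : (segment ℝ p1 pn).Nonempty := ⟨p1, left_mem_segment ℝ p1 pn⟩
  have hfin : S1.Finite := by
    have hsub : S1 ⊆ ⋃ i : Fin n,
        (fun v => Metric.infDist v (segment ℝ p1 pn)) '' (V i : Set (EuclideanSpace ℝ (Fin 2))) := by
      rintro x ⟨i, -, -, v, hv, rfl⟩
      exact Set.mem_iUnion.2 ⟨i, ⟨v, hv, rfl⟩⟩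
    exact Set.Finite.subset (Set.finite_iUnion fun i => (V i).finite_toSet.image _) hsub
  have hS1ne : S1.Nonempty := by
    obtain ⟨v, hv⟩ := hV ⟨1, by omega⟩
    exact ⟨Metric.infDist v (segment ℝ p1 pn),
      ⟨1, by omega⟩, Nat.one_pos, (show 1 < n - 1 by omega), v, hv, rfl⟩
  set M : ℝ := sSup S1 with hMdef
  have hMmem : M ∈ S1 := hS1ne.csSup_mem hfin
  have hMub : ∀ x ∈ S1, x ≤ M := fun x hx => le_csSup hfin.bddAbove hx
  have hM0 : 0 ≤ M := by
    obtain ⟨i, -, -, v, -, hx⟩ := hMmem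
    rw [hx]; exact Metric.infDist_nonneg
  -- every vertex of any admissible realisation is within M of the segment
  have vertBound : ∀ (π : Fin n → EuclideanSpace ℝ (Fin 2)),
      (∀ i, π i ∈ convexHull ℝ ((V i : Finset (EuclideanSpace ℝ (Fin 2))) : Set (EuclideanSpace ℝ (Fin 2)))) →
      π ⟨0, by omega⟩ = p1 → π ⟨n - 1, by omega⟩ = pn →
      ∀ j : Fin n, Metric.infDist (π j) (segment ℝ p1 pn) ≤ M := by
    intro π hπ h0 hlast j
    by_cases hj0 : j.1 = 0
    · have hj : j = ⟨0, by omega⟩ := Fin.ext hj0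
      rw [hj, h0, Metric.infDist_zero_of_mem (left_mem_segment ℝ p1 pn)]
      exact hM0
    by_cases hjn : j.1 = n - 1
    · have hj : j = ⟨n - 1, by omega⟩ := Fin.ext hjn
      rw [hj, hlast, Metric.infDist_zero_of_mem (right_mem_segment ℝ p1 pn)]
      exact hM0
    · refine myInfDistHull (convex_segment p1 pn) hsegne hM0 ?_ (hπ j)
      intro v hv
      refine hMub _ ⟨j, by omega, by have := j.isLt; omega, v, by exact_mod_cast hv, rfl⟩
  -- the realisation attaining the maximum
  obtain ⟨i0, hi0pos, hi0lt, v0, hv0, hMeq⟩ := hMmem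
  set π0 : Fin n → EuclideanSpace ℝ (Fin 2) := fun j =>
    if j = i0 then v0 else if j.1 = 0 then p1 else if j.1 = n - 1 then pn
      else (hV j).choose with hπ0def
  have hπ0mem : ∀ j, π0 j ∈ convexHull ℝ ((V j : Finset (EuclideanSpace ℝ (Fin 2))) : Set (EuclideanSpace ℝ (Fin 2))) := by
    intro j
    rw [hπ0def]
    simp only
    split_ifs with h1 h2 h3
    · subst h1; exact subset_convexHull ℝ _ (by exact_mod_cast hv0)
    · have hj : j = ⟨0, by omega⟩ := Fin.ext h2
      rw [hj]; exact hp1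
    · have hj : j = ⟨n - 1, by omega⟩ := Fin.ext h3
      rw [hj]; exact hpn
    · exact subset_convexHull ℝ _ (by exact_mod_cast (hV j).choose_spec)
  have h00 : π0 ⟨0, by omega⟩ = p1 := by
    have hne0 : (⟨0, by omega⟩ : Fin n) ≠ i0 := by
      intro h; rw [← h] at hi0pos; simp at hi0pos
    rw [hπ0def]; simp only
    rw [if_neg hne0]
    simp
  have h0n : π0 ⟨n - 1, by omega⟩ = pn := by
    have hnen : (⟨n - 1, by omega⟩ : Fin n) ≠ i0 := by
      intro h; rw [← h] at hi0lt
      exact absurd hi0lt (by simp)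
    rw [hπ0def]; simp only
    rw [if_neg hnen]
    simp [show ¬(n - 1 = 0) by omega]
  have hπ0i0 : π0 i0 = v0 := by rw [hπ0def]; simp
  have hv0curve : v0 ∈ polyCurve π0 := by
    have h1 : π0 i0 ∈ polyCurve π0 :=
      Set.mem_iUnion.2 ⟨⟨i0.1, by omega⟩, left_mem_segment ℝ _ _⟩
    rwa [hπ0i0] at h1
  have hsegbdd : Bornology.IsBounded (segment ℝ p1 pn) := by
    rw [← convexHull_pair]
    exact (((Set.finite_singleton pn).insert p1).isCompact_convexHull (𝕜 := ℝ)).isBounded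
  have hcurvebdd : Bornology.IsBounded (polyCurve π0) := by
    apply Bornology.isBounded_iUnion.2
    intro i
    rw [← convexHull_pair]
    exact (((Set.finite_singleton _).insert _).isCompact_convexHull (𝕜 := ℝ)).isBounded
  have hEdist : EMetric.hausdorffEdist (polyCurve π0) (segment ℝ p1 pn) ≠ ⊤ :=
    Metric.hausdorffEdist_ne_top_of_nonempty_of_bounded ⟨v0, hv0curve⟩ hsegne hcurvebdd hsegbdd
  refine ⟨M, ⟨⟨i0, hi0pos, hi0lt, v0, hv0, hMeq⟩, fun x hx => hMub x hx⟩, ?_, ?_⟩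
  · -- membership: the realisation π0 attains M
    refine ⟨π0, hπ0mem, h00, h0n, ?_⟩
    have hle : Metric.hausdorffDist (polyCurve π0) (segment ℝ p1 pn) ≤ M :=
      myHausdorffLe n hn π0 p1 pn M hM0 h00 h0n (vertBound π0 hπ0mem h00 h0n)
    have hge : M ≤ Metric.hausdorffDist (polyCurve π0) (segment ℝ p1 pn) := by
      rw [hMeq]
      exact Metric.infDist_le_hausdorffDist_of_mem hv0curve hEdist
    exact le_antisymm hge hle
  · -- upper bound
    rintro d ⟨π, hπ, hA, hB, rfl⟩
    exact myHausdorffLe n hn π p1 pn M hM0 hA hB (vertBound π hπ hA hB)
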